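/- There is no function θ : (0,∞) → ℝ such that for all k, h > 0 and all q ∈ ℝⁿ, (1/V(D_q(k,h))) ∫_{D_q(k,h)} H(y) dy = H(q) θ(h), where H(y) = √((a₁²+1)y₁²+⋯+(aₙ²+1)yₙ²+k)/√(|y|²+k), aᵢ > 0, and D_q(k,h) = {y : (|q|²+k)(|y|²+k) ≤ (⟨q,y⟩+√(k(k+h)))²}. Consequently the function g(x,z) = z² - Σaᵢ²xᵢ² does not satisfy the equal-lateral-surface-area condition (S*). -/

import Mathlib

open Finset MeasureTheory Real
open scoped RealInnerProductSpace

set_option maxHeartbeats 1000000 in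
/-- There is no function `θ` of `h` alone such that the average of
`H_k(y) = √(Σ(aᵢ²+1)yᵢ²+k)/√(|y|²+k)` over the ellipsoid
`D_q(k,h) = {y : (|q|²+k)(|y|²+k) ≤ (⟨q,y⟩+√(k(k+h)))²}` equals `H_k(q)·θ(h)` for all
`k, h > 0` and all `q`; hence `g(x,z) = z² - Σaᵢ²xᵢ²` does not satisfy Condition (S*). -/
theorem stmt17 (n : ℕ) (hn : 1 ≤ n) (a : Fin n → ℝ) (ha : ∀ i, 0 < a i)
    (H : ℝ → EuclideanSpace ℝ (Fin n) → ℝ)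
    (hH : ∀ k y, H k y = Real.sqrt ((∑ i, ((a i) ^ 2 + 1) * (y i) ^ 2) + k) /
        Real.sqrt ((∑ i, (y i) ^ 2) + k))
    (D : EuclideanSpace ℝ (Fin n) → ℝ → ℝ → Set (EuclideanSpace ℝ (Fin n)))
    (hD : ∀ q k h, D q k h =
        {y | (‖q‖ ^ 2 + k) * (‖y‖ ^ 2 + k) ≤ (⟪q, y⟫ + Real.sqrt (k * (k + h))) ^ 2}) :
    ¬ ∃ θ : ℝ → ℝ, ∀ k h : ℝ, 0 < k → 0 < h → ∀ q : EuclideanSpace ℝ (Fin n),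
        (1 / (volume (D q k h)).toReal) * (∫ y in D q k h, H k y) = H k q * θ h := by
  rintro ⟨θ, hθ⟩
  haveI : Nonempty (Fin n) := ⟨⟨0, hn⟩⟩
  haveI : Nontrivial (EuclideanSpace ℝ (Fin n)) := by
    refine nontrivial_of_ne (EuclideanSpace.single (Classical.arbitrary (Fin n)) 1) 0 fun hc => ?_
    have h1 := congrArg (fun v : EuclideanSpace ℝ (Fin n) => v (Classical.arbitrary (Fin n))) hc
    simp [EuclideanSpace.single_apply] at h1
  -- norm squared
  have normsq : ∀ y : EuclideanSpace ℝ (Fin n), ‖y‖ ^ 2 = ∑ i, (y i) ^ 2 := by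
    intro y
    rw [EuclideanSpace.norm_eq, Real.sq_sqrt (by positivity)]
    simp [sq_abs]
  obtain ⟨i₀, hi₀⟩ := Finite.exists_max a
  obtain ⟨i₁, hi₁⟩ := Finite.exists_min a
  set M : ℝ := Real.sqrt ((a i₀) ^ 2 + 1) with hMdef
  have hMsq : M ^ 2 = (a i₀) ^ 2 + 1 := Real.sq_sqrt (by positivity)
  have hM1 : 1 < M := by
    nlinarith [ha i₀, Real.sqrt_nonneg ((a i₀) ^ 2 + 1)]
  -- pointwise bounds for H 1
  have hS01 : ∀ y : EuclideanSpace ℝ (Fin n),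
      (∑ i, (y i) ^ 2) ≤ ∑ i, ((a i) ^ 2 + 1) * (y i) ^ 2 :=
    fun y => Finset.sum_le_sum fun i _ => by nlinarith [sq_nonneg (y i), sq_nonneg (a i)]
  have hS0nn : ∀ y : EuclideanSpace ℝ (Fin n), (0:ℝ) ≤ ∑ i, (y i) ^ 2 :=
    fun y => Finset.sum_nonneg fun i _ => sq_nonneg _
  have hHge1 : ∀ y, 1 ≤ H 1 y := by
    intro y
    rw [hH, le_div_iff₀ (by positivity), one_mul]
    exact Real.sqrt_le_sqrt (by linarith [hS01 y])
  have hHle : ∀ y, H 1 y ≤ M := by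
    intro y
    rw [hH, div_le_iff₀ (by positivity)]
    rw [← Real.sqrt_sq (le_of_lt (lt_trans one_pos hM1)), ← Real.sqrt_mul (by positivity)]
    apply Real.sqrt_le_sqrt
    have : ∑ i, ((a i) ^ 2 + 1) * (y i) ^ 2 ≤ M ^ 2 * ∑ i, (y i) ^ 2 := by
      rw [Finset.mul_sum]
      refine Finset.sum_le_sum fun i _ => ?_
      have : (a i) ^ 2 + 1 ≤ M ^ 2 := by
        rw [hMsq]; nlinarith [hi₀ i, ha i, ha i₀]
      nlinarith [sq_nonneg (y i)]
    nlinarith [hS0nn y, hMsq, hM1]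
  have hHnn : ∀ y, 0 ≤ H 1 y := fun y => le_trans one_pos.le (hHge1 y)
  have hHgt1 : ∀ y : EuclideanSpace ℝ (Fin n), y ≠ 0 → 1 < H 1 y := by
    intro y hy
    have hS0pos : 0 < ∑ i, (y i) ^ 2 := by
      rw [← normsq]
      have : 0 < ‖y‖ := norm_pos_iff.2 hy
      positivity
    have hstrict : (∑ i, (y i) ^ 2) + 1 < (∑ i, ((a i) ^ 2 + 1) * (y i) ^ 2) + 1 := by
      have : ((a i₁) ^ 2 + 1) * ∑ i, (y i) ^ 2 ≤ ∑ i, ((a i) ^ 2 + 1) * (y i) ^ 2 := by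
        rw [Finset.mul_sum]
        refine Finset.sum_le_sum fun i _ => ?_
        have h1 : a i₁ ≤ a i := hi₁ i
        nlinarith [mul_nonneg (mul_nonneg (sub_nonneg.2 h1)
          (by linarith [ha i₁, ha i] : (0:ℝ) ≤ a i + a i₁)) (sq_nonneg (y i))]
      nlinarith [mul_pos (pow_pos (ha i₁) 2) hS0pos]
    rw [hH, lt_div_iff₀ (by positivity), one_mul]
    exact Real.sqrt_lt_sqrt (by positivity) hstrict
  have hH0 : H 1 0 = 1 := by
    rw [hH]
    simp
  -- continuity of H 1
  have hHcont : Continuous (H 1) := by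
    have heq : H 1 = fun y : EuclideanSpace ℝ (Fin n) =>
        Real.sqrt ((∑ i, ((a i) ^ 2 + 1) * (y i) ^ 2) + 1) /
        Real.sqrt ((∑ i, (y i) ^ 2) + 1) := funext fun y => hH 1 y
    rw [heq]
    apply Continuous.div
    · fun_prop
    · fun_prop
    · intro y
      have : (0:ℝ) < Real.sqrt ((∑ i, (y i) ^ 2) + 1) :=
        Real.sqrt_pos.2 (by linarith [hS0nn y])
      exact ne_of_gt this
  -- Step A : θ 1 > 1 using q = 0
  have hball : D 0 1 1 = Metric.closedBall (0 : EuclideanSpace ℝ (Fin n)) 1 := by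
    rw [hD]
    ext y
    have hs2 : Real.sqrt (1 * (1 + 1)) ^ 2 = 2 := by
      rw [Real.sq_sqrt] <;> norm_num
    simp only [Set.mem_setOf_eq, inner_zero_left, norm_zero, Metric.mem_closedBall,
      dist_zero_right, zero_add]
    constructor
    · intro h
      nlinarith [norm_nonneg y]
    · intro h
      nlinarith [norm_nonneg y]
  have hBvolpos : 0 < volume (Metric.closedBall (0 : EuclideanSpace ℝ (Fin n)) 1) :=
    Metric.measure_closedBall_pos volume 0 one_pos
  have hBvollt : volume (Metric.closedBall (0 : EuclideanSpace ℝ (Fin n)) 1) < ⊤ :=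
    measure_closedBall_lt_top
  set B := Metric.closedBall (0 : EuclideanSpace ℝ (Fin n)) 1 with hBdef
  have hVB : 0 < (volume B).toReal := ENNReal.toReal_pos hBvolpos.ne' hBvollt.ne
  have hint : IntegrableOn (H 1) B volume :=
    hHcont.continuousOn.integrableOn_compact (isCompact_closedBall 0 1)
  have hIgt : (volume B).toReal < ∫ y in B, H 1 y := by
    have hconst : IntegrableOn (fun _ : EuclideanSpace ℝ (Fin n) => (1:ℝ)) B volume :=
      integrableOn_const hBvollt.ne
    have hpos : 0 < ∫ y in B, (H 1 y - 1) := by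
      rw [setIntegral_pos_iff_support_of_nonneg_ae
        (Filter.Eventually.of_forall fun y => sub_nonneg.2 (hHge1 y)) (hint.sub hconst)]
      have hsub : B \ {0} ⊆ Function.support (fun y => H 1 y - 1) ∩ B := by
        rintro y ⟨hyB, hy0⟩
        refine ⟨?_, hyB⟩
        simp only [Function.mem_support]
        have := hHgt1 y (by simpa using hy0)
        intro hc; linarith [sub_eq_zero.mp hc]
      calc 0 < volume B := hBvolpos
        _ = volume (B \ {0}) := (measure_diff_null (measure_singleton 0)).symm
        _ ≤ volume (Function.support (fun y => H 1 y - 1) ∩ B) := measure_mono hsub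
    have hsplit : ∫ y in B, (H 1 y - 1) = (∫ y in B, H 1 y) - ∫ y in B, (1:ℝ) :=
      integral_sub hint hconst
    have hone : ∫ y in B, (1:ℝ) = (volume B).toReal := by simp; rfl
    linarith
  have hθ1 : 1 < θ 1 := by
    have E0 := hθ 1 1 one_pos one_pos 0
    rw [hball, hH0, one_mul] at E0
    rw [one_div] at E0
    rw [← E0]
    have h5 := mul_lt_mul_of_pos_left hIgt (inv_pos.2 hVB)
    rwa [inv_mul_cancel₀ hVB.ne'] at h5
  have hθ1pos : 0 < θ 1 := lt_trans one_pos hθ1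
  -- Step B : construct q far away
  set t : ℝ := Real.sqrt (M ^ 2 / (θ 1 ^ 2 - 1)) with htdef
  have hθsq : 0 < θ 1 ^ 2 - 1 := by nlinarith
  have ht2 : t ^ 2 = M ^ 2 / (θ 1 ^ 2 - 1) := Real.sq_sqrt (by positivity)
  have ht2' : t ^ 2 * (θ 1 ^ 2 - 1) = M ^ 2 := by
    rw [ht2]; field_simp
  set q : EuclideanSpace ℝ (Fin n) := EuclideanSpace.single i₀ t with hqdef
  have hq1 : ∑ i, ((a i) ^ 2 + 1) * (q i) ^ 2 = M ^ 2 * t ^ 2 := by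
    rw [hMsq]
    simp only [hqdef, EuclideanSpace.single_apply]
    rw [Finset.sum_eq_single i₀]
    · simp
    · intro i _ hne
      simp [hne]
    · simp
  have hq0 : ∑ i, (q i) ^ 2 = t ^ 2 := by
    simp only [hqdef, EuclideanSpace.single_apply]
    rw [Finset.sum_eq_single i₀]
    · simp
    · intro i _ hne
      simp [hne]
    · simp
  have hHq : M < H 1 q * θ 1 := by
    have hden : (0:ℝ) < t ^ 2 + 1 := by positivity
    have hkey : M / θ 1 < H 1 q := by
      rw [hH, hq1, hq0]
      have h1 : M / θ 1 = Real.sqrt (M ^ 2 / θ 1 ^ 2) := by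
        rw [Real.sqrt_div (sq_nonneg M), Real.sqrt_sq (by positivity), Real.sqrt_sq hθ1pos.le]
      have h2 : Real.sqrt (M ^ 2 * t ^ 2 + 1) / Real.sqrt (t ^ 2 + 1)
          = Real.sqrt ((M ^ 2 * t ^ 2 + 1) / (t ^ 2 + 1)) :=
        (Real.sqrt_div (by positivity) _).symm
      rw [h1, h2]
      apply Real.sqrt_lt_sqrt (by positivity)
      rw [div_lt_div_iff₀ (by positivity) hden]
      have h4 : M ^ 2 * (t ^ 2 * (θ 1 ^ 2 - 1)) = M ^ 2 * M ^ 2 := by rw [ht2']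
      nlinarith [h4, hM1, hθ1]
    calc M = (M / θ 1) * θ 1 := by field_simp
      _ < H 1 q * θ 1 := mul_lt_mul_of_pos_right hkey hθ1pos
  -- Step C : upper bound for the average over D q 1 1
  have hDsub : D q 1 1 ⊆ Metric.closedBall 0 (2 * Real.sqrt 2 * ‖q‖ + 2) := by
    rw [hD]
    intro y hy
    simp only [Set.mem_setOf_eq] at hy
    have hs2 : Real.sqrt (1 * (1 + 1)) = Real.sqrt 2 := by norm_num
    rw [hs2] at hy
    have hs2sq : Real.sqrt 2 ^ 2 = 2 := Real.sq_sqrt (by norm_num)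
    have hcs : |⟪q, y⟫| ≤ ‖q‖ * ‖y‖ := abs_real_inner_le_norm q y
    have h1 : ‖y‖ ^ 2 ≤ 2 * Real.sqrt 2 * ‖q‖ * ‖y‖ + 1 := by
      nlinarith [abs_nonneg ⟪q, y⟫, sq_abs ⟪q, y⟫, norm_nonneg q, norm_nonneg y,
        Real.sqrt_nonneg 2, le_abs_self ⟪q, y⟫]
    rw [Metric.mem_closedBall, dist_zero_right]
    nlinarith [norm_nonneg q, norm_nonneg y, Real.sqrt_nonneg 2]
  have hDlt : volume (D q 1 1) < ⊤ :=
    lt_of_le_of_lt (measure_mono hDsub) measure_closedBall_lt_top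
  have hIle : (1 / (volume (D q 1 1)).toReal) * (∫ y in D q 1 1, H 1 y) ≤ M := by
    have habs : |∫ y in D q 1 1, H 1 y| ≤ M * (volume (D q 1 1)).toReal := by
      have := norm_setIntegral_le_of_norm_le_const (μ := volume) hDlt
        (fun y _ => by rw [Real.norm_eq_abs, abs_of_nonneg (hHnn y)]; exact hHle y)
      simpa [Real.norm_eq_abs, Measure.real] using this
    rcases eq_or_lt_of_le (ENNReal.toReal_nonneg (a := volume (D q 1 1))) with h0 | hpos
    · rw [← h0]
      simp
      positivity
    · have h2 : ∫ y in D q 1 1, H 1 y ≤ M * (volume (D q 1 1)).toReal :=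
        le_trans (le_abs_self _) habs
      rw [one_div]
      calc (volume (D q 1 1)).toReal⁻¹ * ∫ y in D q 1 1, H 1 y
          ≤ (volume (D q 1 1)).toReal⁻¹ * (M * (volume (D q 1 1)).toReal) := by
            apply mul_le_mul_of_nonneg_left h2 (by positivity)
        _ = M := by field_simp
  have E1 := hθ 1 1 one_pos one_pos q
  rw [E1] at hIle
  linarith
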